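/- Let d be a square-free integer with d ≠ -2. Then the polynomial x^4 + x^3 + d is irreducible over the rationals. -/

import Mathlib

open Polynomial

private lemma monic_deg2_eq (q : ℤ[X]) (hm : q.Monic) (h2 : q.natDegree = 2) :
    q = X^2 + C (q.coeff 1) * X + C (q.coeff 0) := by
  ext n
  match n with
  | 0 => simp only [coeff_add, coeff_C_mul, coeff_X_zero, coeff_C_zero, coeff_X_pow]; norm_num
  | 1 => simp only [coeff_add, coeff_C_mul, coeff_X_one, coeff_C, coeff_X_pow]; norm_num
  | 2 => simp only [coeff_add, coeff_C_mul, coeff_X, coeff_C, coeff_X_pow]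
         norm_num
         exact (h2 ▸ hm.coeff_natDegree : q.coeff 2 = 1)
  | (n+3) =>
    rw [coeff_eq_zero_of_natDegree_lt (by omega)]
    simp only [coeff_add, coeff_C_mul, coeff_X, coeff_C, coeff_X_pow]
    norm_num
    omega

private lemma no_int_root (d : ℤ) (hsf : Squarefree d) (hd : d ≠ -2) (a : ℤ)
    (h : a^4 + a^3 + d = 0) : False := by
  have hu : IsUnit a := hsf a ⟨-(a^2+a), by linear_combination h⟩
  rcases Int.isUnit_iff.mp hu with rfl | rfl
  · exact hd (by linarith)
  · have hd0 : d = 0 := by linarith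
    exact not_squarefree_zero (hd0 ▸ hsf)

private lemma no_monic_factor (d : ℤ) (hsf : Squarefree d) (hd : d ≠ -2)
    (q r : ℤ[X]) (hmq : q.Monic) (hmr : r.Monic)
    (hp : (X^4 + X^3 + C d : ℤ[X]) = q * r) :
    q.natDegree = 0 ∨ r.natDegree = 0 := by
  have hdeg : q.natDegree + r.natDegree = 4 := by
    have := congrArg natDegree hp
    rw [natDegree_mul hmq.ne_zero hmr.ne_zero] at this
    rw [← this]
    compute_degree!
  by_contra hc
  push_neg at hc
  have root_case : ∀ s t : ℤ[X], s.Monic → (X^4 + X^3 + C d : ℤ[X]) = s * t →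
      s.natDegree = 1 → False := by
    intro s t hms hps h1
    set a := s.coeff 0 with ha
    have hs : s = X + C a := hms.eq_X_add_C h1
    have heval : (-a)^4 + (-a)^3 + d = 0 := by
      have := congrArg (fun f : ℤ[X] => f.eval (-a)) hps
      simp [hs] at this
      simpa using this
    exact no_int_root d hsf hd (-a) heval
  have hqle : q.natDegree ≤ 4 := by omega
  interval_cases hq : q.natDegree
  · exact hc.1 rfl
  · exact root_case q r hmq hp hq
  · -- quadratic case
    have hr2 : r.natDegree = 2 := by omega
    set a := q.coeff 1
    set b := q.coeff 0
    set c := r.coeff 1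
    set e := r.coeff 0
    have hq' := monic_deg2_eq q hmq hq
    have hr' := monic_deg2_eq r hmr hr2
    have key : (X^4 + X^3 + C d : ℤ[X]) =
        X^4 + C (a+c) * X^3 + C (b+e+a*c) * X^2 + C (a*e+b*c) * X + C (b*e) := by
      rw [hp, hq', hr']
      simp only [C_add, C_mul]
      ring
    have h3 : (1:ℤ) = a + c := by
      have hh := congrArg (fun f : ℤ[X] => f.coeff 3) key
      simp only [coeff_add, coeff_C_mul, coeff_X_pow, coeff_C, coeff_X] at hh
      norm_num at hh
      linarith [hh]
    have h2 : (0:ℤ) = b + e + a*c := by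
      have hh := congrArg (fun f : ℤ[X] => f.coeff 2) key
      simp only [coeff_add, coeff_C_mul, coeff_X_pow, coeff_C, coeff_X] at hh
      norm_num at hh
      linarith [hh]
    have h1 : (0:ℤ) = a*e + b*c := by
      have hh := congrArg (fun f : ℤ[X] => f.coeff 1) key
      simp only [coeff_add, coeff_C_mul, coeff_X_pow, coeff_C, coeff_X] at hh
      norm_num at hh
      linarith [hh]
    have h0 : d = b*e := by
      have hh := congrArg (fun f : ℤ[X] => f.coeff 0) key
      simp only [coeff_add, coeff_C_mul, coeff_X_pow, coeff_C, coeff_X] at hh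
      norm_num at hh
      linarith [hh]
    have hb : b * (2*a - 1) = a^2 * (a - 1) := by
      linear_combination h1 - a*h2 + (a^2 - b)*h3
    have hunit : (2*a - 1) * (4*a^2 - 2*a - 1 - 8*b) = 1 := by linear_combination -8 * hb
    have hcase : 2*a - 1 = 1 ∨ 2*a - 1 = -1 := by
      rcases Int.isUnit_iff.mp (IsUnit.of_mul_eq_one _ hunit) with h | h <;> omega
    have hb0 : b = 0 := by rcases hcase with h | h <;> nlinarith [hb]
    have hdz : d = 0 := by rw [h0, hb0, zero_mul]
    exact not_squarefree_zero (hdz ▸ hsf)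
  · exact root_case r q hmr (by rw [hp, mul_comm]) (by omega)
  · exact hc.2 (by omega)

/-- For a square-free integer `d ≠ -2`, the polynomial `x^4 + x^3 + d` is
irreducible over `ℚ`. -/
theorem irreducible_quartic_1d (d : ℤ) (hsf : Squarefree d) (hd : d ≠ -2) :
    Irreducible (X ^ 4 + X ^ 3 + C (d : ℚ)) := by
  have hm : (X^4 + X^3 + C d : ℤ[X]).Monic := by monicity!
  have unitcase : ∀ s : ℤ[X], s.Monic → s.natDegree = 0 → IsUnit s := by
    intro s hs h0
    rw [hs.natDegree_eq_zero.mp h0]; exact isUnit_one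
  have hZ : Irreducible (X^4 + X^3 + C d : ℤ[X]) := by
    constructor
    · intro hu
      have := natDegree_eq_zero_of_isUnit hu
      rw [show (X^4 + X^3 + C d : ℤ[X]).natDegree = 4 by compute_degree!] at this
      omega
    · intro q r hp
      have hlc : q.leadingCoeff * r.leadingCoeff = 1 := by
        have := congrArg leadingCoeff hp
        rw [leadingCoeff_mul, hm.leadingCoeff] at this
        exact this.symm
      rcases Int.mul_eq_one_iff_eq_one_or_neg_one.mp hlc with ⟨e1, e2⟩ | ⟨e1, e2⟩
      · rcases no_monic_factor d hsf hd q r e1 e2 hp with h | h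
        · exact Or.inl (unitcase q e1 h)
        · exact Or.inr (unitcase r e2 h)
      · have hmq : (-q).Monic := by simp [Monic, leadingCoeff_neg, e1]
        have hmr : (-r).Monic := by simp [Monic, leadingCoeff_neg, e2]
        have hp' : (X^4 + X^3 + C d : ℤ[X]) = (-q) * (-r) := by rw [neg_mul_neg]; exact hp
        rcases no_monic_factor d hsf hd (-q) (-r) hmq hmr hp' with h | h
        · exact Or.inl (neg_neg q ▸ (unitcase _ hmq h).neg)
        · exact Or.inr (neg_neg r ▸ (unitcase _ hmr h).neg)
  have := (hm.irreducible_iff_irreducible_map_fraction_map (K := ℚ)).mp hZ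
  simpa using this
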